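/- Let m ≥ 1 and p be integers and d = gcd(p, m). Then Coker (1_m − X_m^p) is a free abelian group of rank d, i.e. Coker (1_m − X_m^p) ≅ ℤ^d. -/

import Mathlib

open Matrix Polynomial

/-- The `m × m` permutation matrix over `ℤ` of the cyclic permutation `(1,2,…,m)`:
its `(i,j)` entry is `1` iff `i ≡ j + 1 (mod m)`. -/
def cycMat (m : ℕ) : Matrix (Fin m) (Fin m) ℤ :=
  Matrix.of fun i j => if ((j : ℕ) + 1) % m = (i : ℕ) then 1 else 0

/-- `X_m ^ p` for an integer exponent `p`, well defined since `X_m ^ m = 1`. -/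
def cycMatZPow (m : ℕ) (p : ℤ) : Matrix (Fin m) (Fin m) ℤ :=
  cycMat m ^ (p % (m : ℤ)).toNat

/-- The cokernel `ℤ^m / A·ℤ^n` of an integer matrix. -/
abbrev coker {m n : Type} [Fintype m] [Fintype n] (A : Matrix m n ℤ) :=
  (m → ℤ) ⧸ LinearMap.range A.mulVecLin


/-- `s_p(A) = 1 - A + A² - ⋯ + (-1)^(p-1) A^(p-1)` for a square integer matrix `A`. -/
def sMat {n : Type} [Fintype n] [DecidableEq n] (p : ℕ) (A : Matrix n n ℤ) :
    Matrix n n ℤ :=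
  ∑ i ∈ Finset.range p, ((-1 : ℤ) ^ i) • A ^ i

set_option linter.unusedSectionVars false
open Fin.NatCast Fin.IntCast Fin.CommRing

section aux
variable {m : ℕ} [NeZero m]


lemma cycMat_mulVec (v : Fin m → ℤ) (i : Fin m) :
    (cycMat m).mulVec v i = v (i - 1) := by
  have key : ∀ j : Fin m, (((j : ℕ) + 1) % m = (i : ℕ)) ↔ j = i - 1 := by
    intro j
    have hval : ((j + 1 : Fin m) : ℕ) = ((j : ℕ) + 1) % m := by
      conv_lhs => rw [← Fin.cast_val_eq_self j]
      rw [← Nat.cast_one, ← Nat.cast_add, Fin.val_natCast]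
    rw [eq_sub_iff_add_eq, Fin.ext_iff, hval]
  simp only [cycMat, Matrix.mulVec, dotProduct, Matrix.of_apply]
  rw [Finset.sum_congr rfl (fun j _ => by rw [if_congr (key j) rfl rfl])]
  simp

lemma cycMat_pow_mulVec (k : ℕ) (v : Fin m → ℤ) (i : Fin m) :
    (cycMat m ^ k).mulVec v i = v (i - (k : Fin m)) := by
  induction k generalizing v i with
  | zero => simp
  | succ k ih =>
      rw [pow_succ, ← Matrix.mulVec_mulVec, ih, cycMat_mulVec]
      congr 1
      push_cast
      ring

lemma cycMat_pow_apply (k : ℕ) (i j : Fin m) :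
    (cycMat m ^ k) i j = if j + (k : Fin m) = i then 1 else 0 := by
  have h := cycMat_pow_mulVec (m := m) k (Pi.single j 1) i
  simp only [Matrix.mulVec_single_one, Matrix.col_apply] at h
  rw [h, Pi.single_apply]
  congr 1
  exact propext ⟨fun h' => by rw [← h', sub_add_cancel], fun h' => by rw [← h', add_sub_cancel_right]⟩


/-- generators of the column span -/
def gen (c : Fin m) : Fin m → (Fin m → ℤ) :=
  fun j => Pi.single j 1 - Pi.single (j + c) 1

lemma telescope (c : Fin m) (t : ℕ) (j : Fin m) :
    (Pi.single j 1 - Pi.single (j + (t : Fin m) * c) 1 : Fin m → ℤ)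
      ∈ Submodule.span ℤ (Set.range (gen c)) := by
  induction t with
  | zero => simp
  | succ t ih =>
      have hc : ((t + 1 : ℕ) : Fin m) * c = (t : Fin m) * c + c := by push_cast; ring
      rw [hc, ← add_assoc, ← sub_add_sub_cancel _ (Pi.single (j + (t : Fin m) * c) 1)]
      exact Submodule.add_mem _ ih (Submodule.subset_span ⟨j + (t : Fin m) * c, rfl⟩)

lemma span_le_span (c c' : Fin m) (t : ℕ) (h : (t : Fin m) * c' = c) :
    Submodule.span ℤ (Set.range (gen c)) ≤ Submodule.span ℤ (Set.range (gen c')) := by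
  rw [Submodule.span_le]
  rintro _ ⟨j, rfl⟩
  have := telescope c' t j
  rw [h] at this
  exact this

lemma span_eq_gcd (k : ℕ) :
    Submodule.span ℤ (Set.range (gen ((k : Fin m))))
      = Submodule.span ℤ (Set.range (gen ((Nat.gcd k m : Fin m)))) := by
  set d := Nat.gcd k m with hd
  apply le_antisymm
  · -- c = k = (k/d) * d
    apply span_le_span _ _ (k / d)
    rw [← Nat.cast_mul, Nat.div_mul_cancel (Nat.gcd_dvd_left k m)]
  · -- d = a * k  mod m
    have hb : ((d : ℤ) : Fin m) = ((k : ℤ) : Fin m) * ((Nat.gcdA k m : ℤ) : Fin m) := by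
      rw [← Int.cast_mul, ← sub_eq_zero, ← Int.cast_sub]
      have : (d : ℤ) - (k : ℤ) * Nat.gcdA k m = (m : ℤ) * Nat.gcdB k m := by
        rw [hd, Nat.gcd_eq_gcd_ab]; ring
      rw [this, Int.cast_mul]
      simp [Fin.natCast_self]
    apply span_le_span _ _ (((Nat.gcdA k m : ℤ) : Fin m)).val
    rw [Fin.cast_val_eq_self]
    push_cast at hb ⊢
    rw [hb]; ring
lemma range_eq_span (k : ℕ) :
    LinearMap.range (1 - cycMat m ^ k).mulVecLin
      = Submodule.span ℤ (Set.range (gen ((k : Fin m)))) := by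
  rw [Matrix.range_mulVecLin]
  congr 1
  have : (1 - cycMat m ^ k)ᵀ = fun j i => gen ((k : Fin m)) j i := by
    ext j i
    simp only [Matrix.transpose_apply, Matrix.sub_apply, Matrix.one_apply,
      cycMat_pow_apply, gen, Pi.sub_apply, Pi.single_apply]
    rcases eq_or_ne i (j + (k : Fin m)) with h | h
    · simp [h]
    · simp [h, Ne.symm h]
  rw [show (1 - cycMat m ^ k).col = (1 - cycMat m ^ k)ᵀ from rfl, this]

lemma natCast_val_eq {x : ℕ} (hx : x < m) : (((x : Fin m)) : ℕ) = x := by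
  rw [Fin.val_natCast]; exact Nat.mod_eq_of_lt hx

lemma idx_lt {d L' r t : ℕ} (hm : m = d * (L' + 1)) (hr : r < d) (ht : t < L' + 1) :
    r + t * d < m := by
  have h1 : t * d ≤ L' * d := Nat.mul_le_mul_right d (by omega)
  have h2 : d * (L' + 1) = L' * d + d := by ring
  omega

lemma idx_sub {d L' r t : ℕ} (hm : m = d * (L' + 1)) (hd0 : 0 < d)
    (hr : r < d) (ht : t < L' + 1) :
    ((r + t * d : ℕ) : Fin m) - ((d : ℕ) : Fin m)
      = ((r + ((t + L') % (L' + 1)) * d : ℕ) : Fin m) := by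
  have hb := idx_lt (m := m) hm hr ht
  have hb' : ∀ t', t' < L' + 1 → r + t' * d < m := fun t' ht' => idx_lt hm hr ht'
  apply Fin.ext
  rw [Fin.sub_def]
  simp only [Fin.val_natCast]
  rw [Nat.mod_eq_of_lt hb, Nat.mod_eq_of_lt (hb' _ (Nat.mod_lt _ (by omega)))]
  rcases Nat.lt_or_ge d m with hdm | hdm
  · -- d < m
    rw [Nat.mod_eq_of_lt hdm]
    rcases Nat.eq_zero_or_pos t with rfl | ht1
    · -- t = 0
      have h1 : (0 + L') % (L' + 1) = L' := by rw [Nat.zero_add]; exact Nat.mod_eq_of_lt (by omega)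
      rw [h1]
      have h2 : m - d + (r + 0 * d) = r + L' * d := by
        have : m = L' * d + d := by rw [hm]; ring
        omega
      rw [h2, Nat.mod_eq_of_lt (hb' _ (by omega))]
    · -- t ≥ 1
      have h1 : (t + L') % (L' + 1) = t - 1 := by
        have : t + L' = (L' + 1) + (t - 1) := by omega
        rw [this, Nat.add_mod_left, Nat.mod_eq_of_lt (by omega)]
      rw [h1]
      have h3 : (t - 1) * d = t * d - d := by rw [Nat.sub_mul, one_mul]
      have h4 : d ≤ t * d := by
        calc d = 1 * d := (one_mul d).symm
        _ ≤ t * d := Nat.mul_le_mul_right d ht1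
      have h2 : m - d + (r + t * d) = m + (r + (t - 1) * d) := by omega
      rw [h2, Nat.add_mod_left, Nat.mod_eq_of_lt (hb' _ (by omega))]
  · -- d = m, so L' = 0, t = 0
    have hdm' : d = m := by
      have : d ≤ m := by
        rw [hm]; calc d = d * 1 := (mul_one d).symm
        _ ≤ d * (L' + 1) := Nat.mul_le_mul_left d (by omega)
      omega
    have hL0 : L' = 0 := by
      rcases Nat.eq_zero_or_pos L' with h | h
      · exact h
      · exfalso; nlinarith [hm]
    subst hdm'
    have ht0 : t = 0 := by omega
    subst ht0; subst hL0
    show (d - d % d + (r + 0 * d)) % d = r + (0 + 0) % (0 + 1) * d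
    rw [Nat.mod_self, Nat.zero_mul, Nat.add_zero, Nat.sub_zero, Nat.add_mod_left,
      Nat.mod_eq_of_lt hr]
def phiMap (m d L' : ℕ) [NeZero m] : (Fin m → ℤ) →ₗ[ℤ] (Fin d → ℤ) where
  toFun v := fun r => ∑ t ∈ Finset.range (L' + 1), v (((r : ℕ) + t * d : ℕ) : Fin m)
  map_add' u v := by funext r; simp [Finset.sum_add_distrib]
  map_smul' a v := by funext r; simp [Finset.mul_sum]

lemma phi_comp {d L' : ℕ} (hm : m = d * (L' + 1)) (hd0 : 0 < d) (v : Fin m → ℤ) :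
    phiMap m d L' (fun i => v i - v (i - ((d : ℕ) : Fin m))) = 0 := by
  funext r
  show ∑ t ∈ Finset.range (L' + 1),
      (v (((r : ℕ) + t * d : ℕ) : Fin m)
        - v ((((r : ℕ) + t * d : ℕ) : Fin m) - ((d : ℕ) : Fin m))) = 0
  rw [Finset.sum_sub_distrib]
  have key : ∑ t ∈ Finset.range (L' + 1),
      v ((((r : ℕ) + t * d : ℕ) : Fin m) - ((d : ℕ) : Fin m))
      = ∑ t ∈ Finset.range (L' + 1), v (((r : ℕ) + t * d : ℕ) : Fin m) := by
    rw [Finset.sum_congr rfl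
      (fun t ht => by rw [idx_sub hm hd0 r.isLt (Finset.mem_range.mp ht)])]
    refine Finset.sum_nbij' (fun t => (t + L') % (L' + 1)) (fun t => (t + 1) % (L' + 1))
      (fun a _ => Finset.mem_range.mpr (Nat.mod_lt _ (by omega)))
      (fun a _ => Finset.mem_range.mpr (Nat.mod_lt _ (by omega)))
      (fun a ha => ?_) (fun a ha => ?_) (fun a _ => rfl)
    · have ha' := Finset.mem_range.mp ha
      show ((a + L') % (L' + 1) + 1) % (L' + 1) = a
      rw [Nat.mod_add_mod]
      have : a + L' + 1 = (L' + 1) + a := by omega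
      rw [this, Nat.add_mod_left, Nat.mod_eq_of_lt ha']
    · have ha' := Finset.mem_range.mp ha
      show ((a + 1) % (L' + 1) + L') % (L' + 1) = a
      rw [Nat.mod_add_mod]
      have : a + 1 + L' = (L' + 1) + a := by omega
      rw [this, Nat.add_mod_left, Nat.mod_eq_of_lt ha']
  rw [key, sub_self]

lemma phi_surj {d L' : ℕ} (hm : m = d * (L' + 1)) (hd0 : 0 < d) :
    Function.Surjective (phiMap m d L') := by
  intro w
  refine ⟨fun i => if h : (i : ℕ) < d then w ⟨i, h⟩ else 0, ?_⟩
  funext r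
  show ∑ t ∈ Finset.range (L' + 1),
      (fun i : Fin m => if h : (i : ℕ) < d then w ⟨i, h⟩ else 0)
        (((r : ℕ) + t * d : ℕ) : Fin m) = w r
  rw [Finset.sum_eq_single 0]
  · have hlt : (r : ℕ) + 0 * d < m := idx_lt hm r.isLt (Nat.succ_pos _)
    have hv : ((((r : ℕ) + 0 * d : ℕ) : Fin m) : ℕ) = (r : ℕ) := by
      rw [natCast_val_eq hlt]; omega
    simp only
    rw [dif_pos (by rw [hv]; exact r.isLt)]
    congr 1
    exact Fin.ext hv
  · intro t ht ht0
    have ht' := Finset.mem_range.mp ht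
    have hlt : (r : ℕ) + t * d < m := idx_lt hm r.isLt ht'
    have hge : ¬ ((((r : ℕ) + t * d : ℕ) : Fin m) : ℕ) < d := by
      rw [natCast_val_eq hlt]
      have : d ≤ t * d := by
        calc d = 1 * d := (one_mul d).symm
        _ ≤ t * d := Nat.mul_le_mul_right d (by omega)
      omega
    simp only
    rw [dif_neg hge]
  · intro h
    exact absurd (Finset.mem_range.mpr (Nat.succ_pos _)) h

lemma phi_ker {d L' : ℕ} (hm : m = d * (L' + 1)) (hd0 : 0 < d) (v : Fin m → ℤ)
    (hv : phiMap m d L' v = 0) :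
    ∃ u : Fin m → ℤ, ∀ i, v i = u i - u (i - ((d : ℕ) : Fin m)) := by
  refine ⟨fun x => ∑ s ∈ Finset.range ((x : ℕ) / d),
    v ((((x : ℕ) % d) + (s + 1) * d : ℕ) : Fin m), ?_⟩
  intro i
  have hrd : (i : ℕ) % d < d := Nat.mod_lt _ hd0
  have htL : (i : ℕ) / d < L' + 1 := by
    rw [Nat.div_lt_iff_lt_mul hd0, mul_comm (L' + 1) d, ← hm]; exact i.isLt
  have hidx : i = (((i : ℕ) % d + ((i : ℕ) / d) * d : ℕ) : Fin m) := by
    rw [Nat.mod_add_div', Fin.cast_val_eq_self]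
  have hsub : i - ((d : ℕ) : Fin m)
      = (((i : ℕ) % d + (((i : ℕ) / d + L') % (L' + 1)) * d : ℕ) : Fin m) := by
    conv_lhs => rw [hidx]
    exact idx_sub hm hd0 hrd htL
  have ht'L : ((i : ℕ) / d + L') % (L' + 1) < L' + 1 := Nat.mod_lt _ (by omega)
  have hsval : (i - ((d : ℕ) : Fin m)).val = (i : ℕ) % d + (((i : ℕ) / d + L') % (L' + 1)) * d := by
    rw [hsub, natCast_val_eq (idx_lt hm hrd ht'L)]
  have hsmod : (i - ((d : ℕ) : Fin m)).val % d = (i : ℕ) % d := by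
    rw [hsval, Nat.add_mul_mod_self_right, Nat.mod_eq_of_lt hrd]
  have hsdiv : (i - ((d : ℕ) : Fin m)).val / d = ((i : ℕ) / d + L') % (L' + 1) := by
    rw [hsval, Nat.add_mul_div_right _ _ hd0, Nat.div_eq_of_lt hrd, zero_add]
  simp only [hsmod, hsdiv]
  rcases Nat.eq_zero_or_pos ((i : ℕ) / d) with h0 | h1
  · -- t = 0 case
    rw [h0]
    have ht' : (0 + L') % (L' + 1) = L' := by
      rw [Nat.zero_add]; exact Nat.mod_eq_of_lt (by omega)
    rw [ht']
    have hφ := congrFun hv ⟨(i : ℕ) % d, hrd⟩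
    simp only [phiMap, LinearMap.coe_mk, AddHom.coe_mk, Pi.zero_apply] at hφ
    rw [Finset.sum_range_succ'] at hφ
    simp only [Finset.range_zero, Finset.sum_empty]
    have h00 : v i = v (((i : ℕ) % d + 0 * d : ℕ) : Fin m) := by
      conv_lhs => rw [hidx, h0]
    rw [h00]
    linarith [hφ]
  · -- t ≥ 1 case
    obtain ⟨t'', ht''⟩ : ∃ t'', (i : ℕ) / d = t'' + 1 := ⟨(i : ℕ) / d - 1, by omega⟩
    rw [ht'']
    have ht' : (t'' + 1 + L') % (L' + 1) = t'' := by
      have : t'' + 1 + L' = (L' + 1) + t'' := by omega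
      rw [this, Nat.add_mod_left]
      exact Nat.mod_eq_of_lt (by omega)
    rw [ht', Finset.sum_range_succ, add_sub_cancel_left]
    conv_lhs => rw [hidx, ht'']
end aux

theorem stmt_2 (m : ℕ) (hm : 1 ≤ m) (p : ℤ) (d : ℕ) (hd : d = Int.gcd p m) :
    Nonempty (coker (1 - cycMatZPow m p) ≃+ (Fin d → ℤ)) := by
  haveI : NeZero m := ⟨by omega⟩
  set k := (p % (m : ℤ)).toNat with hk
  have hm0 : (m : ℤ) ≠ 0 := by exact_mod_cast (by omega : m ≠ 0)
  have hk' : (k : ℤ) = p % m := Int.toNat_of_nonneg (Int.emod_nonneg p hm0)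
  have hgcd : Int.gcd p m = Nat.gcd k m := by
    have h1 : Int.gcd p m = Int.gcd (p % m) m := by
      apply Nat.dvd_antisymm
      · rw [← Int.natCast_dvd_natCast]
        refine Int.dvd_coe_gcd ?_ (Int.gcd_dvd_right _ _)
        have : p % m = p - m * (p / m) := by rw [Int.emod_def]
        rw [this]
        exact dvd_sub (Int.gcd_dvd_left _ _) ((Int.gcd_dvd_right _ _).mul_right _)
      · rw [← Int.natCast_dvd_natCast]
        refine Int.dvd_coe_gcd ?_ (Int.gcd_dvd_right _ _)
        have h2 : (↑(Int.gcd (p % ↑m) ↑m) : ℤ) ∣ ↑m * (p / ↑m) + p % ↑m :=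
          dvd_add ((Int.gcd_dvd_right _ _).mul_right _) (Int.gcd_dvd_left _ _)
        rwa [Int.mul_ediv_add_emod p m] at h2
    rw [h1, ← hk']
    exact Int.gcd_natCast_natCast k m
  have hded : d = Nat.gcd k m := by rw [hd, hgcd]
  subst hded
  set dd := Nat.gcd k m with hdd
  have hdd0 : 0 < dd := Nat.gcd_pos_of_pos_right _ (by omega)
  obtain ⟨L, hL⟩ := Nat.gcd_dvd_right k m
  have hL0 : 0 < L := by
    rcases Nat.eq_zero_or_pos L with rfl | h
    · omega
    · exact h
  obtain ⟨L', rfl⟩ : ∃ L', L = L' + 1 := ⟨L - 1, by omega⟩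
  have hrange : LinearMap.range (1 - cycMatZPow m p).mulVecLin
      = LinearMap.ker (phiMap m dd L') := by
    have h1 : cycMatZPow m p = cycMat m ^ k := rfl
    rw [h1, range_eq_span, span_eq_gcd, ← hdd, ← range_eq_span]
    apply le_antisymm
    · rintro w ⟨u, rfl⟩
      rw [LinearMap.mem_ker]
      have hw : (1 - cycMat m ^ dd).mulVecLin u
          = fun i => u i - u (i - ((dd : ℕ) : Fin m)) := by
        funext i
        rw [Matrix.mulVecLin_apply, Matrix.sub_mulVec, Matrix.one_mulVec,
          Pi.sub_apply, cycMat_pow_mulVec]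
      rw [hw]
      exact phi_comp hL hdd0 u
    · intro v hv
      obtain ⟨u, hu⟩ := phi_ker hL hdd0 v (LinearMap.mem_ker.mp hv)
      refine ⟨u, ?_⟩
      funext i
      rw [Matrix.mulVecLin_apply, Matrix.sub_mulVec, Matrix.one_mulVec,
        Pi.sub_apply, cycMat_pow_mulVec]
      exact (hu i).symm
  exact ⟨((Submodule.quotEquivOfEq _ _ hrange).trans
    ((phiMap m dd L').quotKerEquivOfSurjective (phi_surj hL hdd0))).toAddEquiv⟩
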